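/- For any two probability distributions μ and ν on a finite set and any 0 < α < β < 1, the Hellinger-λ divergences satisfy (α/β)·H_β(μ,ν) ≤ H_α(μ,ν) ≤ ((1-α)/(1-β))·H_β(μ,ν). -/

import Mathlib

open Real Finset

/-- Hellinger-λ affinity between two distributions on a finite set. -/
noncomputable def betaAff {X : Type*} [Fintype X] (l : ℝ) (P Q : X → ℝ) : ℝ :=
  ∑ x, P x ^ l * Q x ^ (1 - l)

/-- Hellinger-λ divergence. -/
noncomputable def hellinger {X : Type*} [Fintype X] (l : ℝ) (P Q : X → ℝ) : ℝ :=
  1 - betaAff l P Q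

lemma hl_ineq1 (a b α β : ℝ) (ha : 0 ≤ a) (hb : 0 ≤ b)
    (hα : 0 < α) (hαβ : α < β) (hβ : β < 1) :
    a ^ α * b ^ (1 - α) ≤ (α / β) * (a ^ β * b ^ (1 - β)) + (1 - α / β) * b := by
  have hβ0 : 0 < β := hα.trans hαβ
  have hw1 : 0 ≤ α / β := by positivity
  have hw2 : 0 ≤ 1 - α / β := by
    have := (div_lt_one hβ0).2 hαβ; linarith
  rcases eq_or_lt_of_le ha with ha0 | ha0
  · rw [← ha0, Real.zero_rpow hα.ne', Real.zero_rpow hβ0.ne']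
    nlinarith
  rcases eq_or_lt_of_le hb with hb0 | hb0
  · rw [← hb0, Real.zero_rpow (by intro h; linarith : (1:ℝ) - α ≠ 0),
      Real.zero_rpow (by intro h; linarith : (1:ℝ) - β ≠ 0)]
    simp
  have e1 : β * (α / β) = α := by field_simp
  have e2 : (1 - β) * (α / β) + (1 - α / β) = 1 - α := by field_simp; ring
  have key : a ^ α * b ^ (1 - α) =
      (a ^ β * b ^ (1 - β)) ^ (α / β) * b ^ (1 - α / β) := by
    rw [Real.mul_rpow (by positivity) (by positivity), ← Real.rpow_mul ha,
      ← Real.rpow_mul hb, mul_assoc, ← Real.rpow_add hb0, e1, e2]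
  rw [key]
  exact Real.geom_mean_le_arith_mean2_weighted hw1 hw2 (by positivity) hb (by ring)

lemma hl_ineq2 (a b α β : ℝ) (ha : 0 ≤ a) (hb : 0 ≤ b)
    (hα : 0 < α) (hαβ : α < β) (hβ : β < 1) :
    a ^ β * b ^ (1 - β) ≤
      ((1 - β) / (1 - α)) * (a ^ α * b ^ (1 - α)) + (1 - (1 - β) / (1 - α)) * a := by
  have hβ0 : 0 < β := hα.trans hαβ
  have hα1 : (0:ℝ) < 1 - α := by linarith
  have hβ1 : (0:ℝ) < 1 - β := by linarith
  have hw1 : 0 ≤ (1 - β) / (1 - α) := by positivity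
  have hw2 : 0 ≤ 1 - (1 - β) / (1 - α) := by
    have := (div_lt_one hα1).2 (by linarith : 1 - β < 1 - α); linarith
  rcases eq_or_lt_of_le ha with ha0 | ha0
  · rw [← ha0, Real.zero_rpow hα.ne', Real.zero_rpow hβ0.ne']
    simp
  rcases eq_or_lt_of_le hb with hb0 | hb0
  · rw [← hb0, Real.zero_rpow hα1.ne', Real.zero_rpow hβ1.ne']
    nlinarith
  have e1 : α * ((1 - β) / (1 - α)) + (1 - (1 - β) / (1 - α)) = β := by
    field_simp; ring
  have e2 : (1 - α) * ((1 - β) / (1 - α)) = 1 - β := by field_simp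
  have key : a ^ β * b ^ (1 - β) =
      (a ^ α * b ^ (1 - α)) ^ ((1 - β) / (1 - α)) * a ^ (1 - (1 - β) / (1 - α)) := by
    rw [Real.mul_rpow (by positivity) (by positivity), ← Real.rpow_mul ha,
      ← Real.rpow_mul hb, mul_right_comm, ← Real.rpow_add ha0, e1, e2]
  rw [key]
  exact Real.geom_mean_le_arith_mean2_weighted hw1 hw2 (by positivity) ha (by ring)

theorem hellinger_lambda_comparison {X : Type*} [Fintype X]
    (μ ν : X → ℝ) (hμ0 : ∀ x, 0 ≤ μ x) (hν0 : ∀ x, 0 ≤ ν x)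
    (hμ1 : ∑ x, μ x = 1) (hν1 : ∑ x, ν x = 1)
    (α β : ℝ) (hα : 0 < α) (hαβ : α < β) (hβ : β < 1) :
    (α / β) * hellinger β μ ν ≤ hellinger α μ ν ∧
      hellinger α μ ν ≤ ((1 - α) / (1 - β)) * hellinger β μ ν := by
  have hβ0 : 0 < β := hα.trans hαβ
  have hα1 : (0:ℝ) < 1 - α := by linarith
  have hβ1 : (0:ℝ) < 1 - β := by linarith
  have hsum1 : betaAff α μ ν ≤ (α / β) * betaAff β μ ν + (1 - α / β) := by
    have h : ∑ x, μ x ^ α * ν x ^ (1 - α) ≤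
        ∑ x, ((α / β) * (μ x ^ β * ν x ^ (1 - β)) + (1 - α / β) * ν x) :=
      Finset.sum_le_sum fun x _ => hl_ineq1 (μ x) (ν x) α β (hμ0 x) (hν0 x) hα hαβ hβ
    simpa [betaAff, Finset.sum_add_distrib, ← Finset.mul_sum, hν1] using h
  have hsum2 : betaAff β μ ν ≤
      ((1 - β) / (1 - α)) * betaAff α μ ν + (1 - (1 - β) / (1 - α)) := by
    have h : ∑ x, μ x ^ β * ν x ^ (1 - β) ≤
        ∑ x, (((1 - β) / (1 - α)) * (μ x ^ α * ν x ^ (1 - α)) +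
          (1 - (1 - β) / (1 - α)) * μ x) :=
      Finset.sum_le_sum fun x _ => hl_ineq2 (μ x) (ν x) α β (hμ0 x) (hν0 x) hα hαβ hβ
    simpa [betaAff, Finset.sum_add_distrib, ← Finset.mul_sum, hμ1] using h
  have h1 : β * betaAff α μ ν ≤ α * betaAff β μ ν + (β - α) := by
    have h := mul_le_mul_of_nonneg_left hsum1 hβ0.le
    have e : β * ((α / β) * betaAff β μ ν + (1 - α / β)) =
        α * betaAff β μ ν + (β - α) := by field_simp
    rw [e] at h; exact h
  have h2 : (1 - α) * betaAff β μ ν ≤ (1 - β) * betaAff α μ ν + (β - α) := by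
    have h := mul_le_mul_of_nonneg_left hsum2 hα1.le
    have e : (1 - α) * (((1 - β) / (1 - α)) * betaAff α μ ν + (1 - (1 - β) / (1 - α))) =
        (1 - β) * betaAff α μ ν + (β - α) := by field_simp; ring
    rw [e] at h; exact h
  constructor
  · rw [hellinger, hellinger, div_mul_eq_mul_div, div_le_iff₀ hβ0]
    nlinarith
  · rw [hellinger, hellinger, div_mul_eq_mul_div, le_div_iff₀ hβ1]
    nlinarith
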